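/- Let j ≥ 1 be an integer and let g : ℝ → ℂ be 2j+2 times differentiable. Then the functions Δ_j(g) and Δ_{j-1}(g'') are differentiable and for every x ∈ ℝ, Δ_{j-1}(g'')(x)·(Δ_j(g))'(x) − Δ_j(g)(x)·(Δ_{j-1}(g''))'(x) = Δ_{j-1}(g')(x)·Δ_j(g')(x). -/

import Mathlib

/-- coordinate form of the linear dependence of `n+1` vectors in `n`-space -/
lemma alt_sum {n : ℕ} (w : Fin (n + 1) → Fin n → ℂ) (i : Fin n) :
    ∑ k : Fin (n + 1), (-1) ^ (k : ℕ) * w k i *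
      (Matrix.of fun a b => w (k.succAbove a) b).det = 0 := by
  set M : Matrix (Fin (n + 1)) (Fin (n + 1)) ℂ :=
    Matrix.of fun k l => Fin.cases (motive := fun _ => ℂ) (w k i) (w k) l with hM
  have h0 : M.det = 0 := by
    refine Matrix.det_zero_of_column_eq (i := 0) (j := i.succ)
      (Fin.succ_ne_zero i).symm fun k => ?_
    simp [hM]
  rw [Matrix.det_succ_column_zero] at h0
  rw [← h0]
  refine Finset.sum_congr rfl fun k _ => ?_
  have h1 : M k 0 = w k i := by simp [hM]
  have h2 : (M.submatrix k.succAbove Fin.succ) = Matrix.of fun a b => w (k.succAbove a) b := by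
    ext a b
    simp [hM]
  rw [h1, h2]

lemma dep_sum {n : ℕ} (w : Fin (n + 2) → Fin (n + 1) → ℂ)
    (U : Matrix (Fin (n + 1)) (Fin (n + 1)) ℂ) (r : Fin (n + 1)) :
    ∑ k : Fin (n + 2), (-1) ^ (k : ℕ) * (U.updateRow r (w k)).det *
      (Matrix.of fun a b => w (k.succAbove a) b).det = 0 := by
  have hexp : ∀ k : Fin (n + 2), (U.updateRow r (w k)).det =
      ∑ l : Fin (n + 1), (-1) ^ ((r : ℕ) + (l : ℕ)) * w k l *
        (U.submatrix r.succAbove l.succAbove).det := by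
    intro k
    rw [Matrix.det_succ_row _ r]
    refine Finset.sum_congr rfl fun l _ => ?_
    have h3 : (U.updateRow r (w k)).submatrix r.succAbove l.succAbove =
        U.submatrix r.succAbove l.succAbove := by
      ext a b
      simp [Matrix.updateRow_ne (Fin.succAbove_ne r a)]
    rw [h3, Matrix.updateRow_self]
  calc ∑ k : Fin (n + 2), (-1) ^ (k : ℕ) * (U.updateRow r (w k)).det *
        (Matrix.of fun a b => w (k.succAbove a) b).det
      = ∑ k : Fin (n + 2), ∑ l : Fin (n + 1),
          ((-1) ^ ((r : ℕ) + (l : ℕ)) * (U.submatrix r.succAbove l.succAbove).det) *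
          ((-1) ^ (k : ℕ) * w k l * (Matrix.of fun a b => w (k.succAbove a) b).det) := by
        refine Finset.sum_congr rfl fun k _ => ?_
        rw [hexp k, Finset.mul_sum, Finset.sum_mul]
        exact Finset.sum_congr rfl fun l _ => by ring
    _ = ∑ l : Fin (n + 1), ((-1) ^ ((r : ℕ) + (l : ℕ)) * (U.submatrix r.succAbove l.succAbove).det) *
          (∑ k : Fin (n + 2), (-1) ^ (k : ℕ) * w k l *
            (Matrix.of fun a b => w (k.succAbove a) b).det) := by
        rw [Finset.sum_comm]
        exact Finset.sum_congr rfl fun l _ => (Finset.mul_sum _ _ _).symm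
    _ = 0 := by
        refine Finset.sum_eq_zero fun l _ => ?_
        rw [alt_sum, mul_zero]

lemma det_unit_last {n : ℕ} (M : Matrix (Fin (n + 1)) (Fin (n + 1)) ℂ) (r : Fin (n + 1))
    (hM : ∀ l, M (Fin.last n) l = if l = r then 1 else 0) :
    M.det = (-1) ^ (n + (r : ℕ)) * (M.submatrix Fin.castSucc r.succAbove).det := by
  rw [Matrix.det_succ_row M (Fin.last n)]
  rw [Finset.sum_eq_single r]
  · rw [hM r, if_pos rfl, mul_one, Fin.succAbove_last, Fin.val_last]
  · intro l _ hl
    rw [hM l, if_neg hl, mul_zero, zero_mul]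
  · intro h; exact absurd (Finset.mem_univ r) h

lemma succAbove_val {n : ℕ} (p : Fin (n + 1)) (i : Fin n) :
    ((p.succAbove i : Fin (n + 1)) : ℕ) = if (i : ℕ) < (p : ℕ) then (i : ℕ) else (i : ℕ) + 1 := by
  rcases lt_or_ge ((i : ℕ)) ((p : ℕ)) with h | h
  · rw [Fin.succAbove_of_castSucc_lt _ _ (by simpa [Fin.lt_def] using h), if_pos h]
    simp
  · rw [Fin.succAbove_of_le_castSucc _ _ (by simpa [Fin.le_def] using h), if_neg (not_lt.mpr h)]
    simp

noncomputable def pluckerW (m : ℕ) (h : ℕ → ℂ) (k : Fin (m + 4)) (b : Fin (m + 3)) : ℂ :=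
  if (k : ℕ) ≤ m then h ((k : ℕ) + 1 + (b : ℕ))
  else if (k : ℕ) = m + 1 then (if (b : ℕ) = 0 then 1 else 0)
  else if (k : ℕ) = m + 2 then (if (b : ℕ) = m + 1 then 1 else 0)
  else (if (b : ℕ) = m + 2 then 1 else 0)

-- det of W at k = m+1 : equals C
lemma hW1 (m : ℕ) (h : ℕ → ℂ) :
    (Matrix.of fun a b => pluckerW m h ((⟨m + 1, by omega⟩ : Fin (m + 4)).succAbove a) b).det =
      (Matrix.of fun i l : Fin (m + 1) => h (i.1 + l.1 + 1)).det := by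
  rw [det_unit_last _ (Fin.last (m + 2)) ?hrow]
  case hrow =>
    intro l
    have hidx : (((⟨m + 1, by omega⟩ : Fin (m + 4)).succAbove (Fin.last (m + 2))) : ℕ) = m + 3 := by
      rw [succAbove_val]; simp
    simp only [Matrix.of_apply, pluckerW, hidx]
    rw [if_neg (by omega), if_neg (by omega), if_neg (by omega)]
    simp [Fin.ext_iff]
  rw [det_unit_last _ (Fin.last (m + 1)) ?hrow2]
  case hrow2 =>
    intro l
    have hidx : (((⟨m + 1, by omega⟩ : Fin (m + 4)).succAbove ((Fin.last (m + 1)).castSucc)) : ℕ)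
        = m + 2 := by
      rw [succAbove_val]; simp
    simp only [Matrix.submatrix_apply, Matrix.of_apply, Fin.succAbove_last, pluckerW, hidx]
    simp [Fin.ext_iff]
  have heq : (((Matrix.of fun a b => pluckerW m h ((⟨m + 1, by omega⟩ : Fin (m + 4)).succAbove a) b).submatrix
      Fin.castSucc (Fin.last (m + 2)).succAbove).submatrix Fin.castSucc (Fin.last (m + 1)).succAbove)
      = (Matrix.of fun i l : Fin (m + 1) => h (i.1 + l.1 + 1)) := by
    ext a b
    have hidx : (((⟨m + 1, by omega⟩ : Fin (m + 4)).succAbove ((a.castSucc).castSucc)) : ℕ)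
        = (a : ℕ) := by
      rw [succAbove_val]; simp; exact Nat.lt_succ_iff.mp a.isLt
    simp only [Matrix.submatrix_apply, Matrix.of_apply, Fin.succAbove_last, pluckerW, hidx]
    rw [if_pos (by omega)]
    simp only [Fin.coe_castSucc]
    congr 1
    omega
  rw [heq]
  rw [Fin.val_last, Fin.val_last]
  rw [show ((-1 : ℂ)) ^ (m + 2 + (m + 2)) = 1 from Even.neg_one_pow ⟨m + 2, by ring⟩,
    show ((-1 : ℂ)) ^ (m + 1 + (m + 1)) = 1 from Even.neg_one_pow ⟨m + 1, by ring⟩]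
  ring

lemma hW2 (m : ℕ) (h : ℕ → ℂ) :
    (Matrix.of fun a b => pluckerW m h ((⟨m + 2, by omega⟩ : Fin (m + 4)).succAbove a) b).det =
      (-1) ^ (m + 1) * (Matrix.of fun i l : Fin (m + 1) => h (i.1 + l.1 + 2)).det := by
  rw [det_unit_last _ (Fin.last (m + 2)) ?hrow]
  case hrow =>
    intro l
    have hidx : (((⟨m + 2, by omega⟩ : Fin (m + 4)).succAbove (Fin.last (m + 2))) : ℕ) = m + 3 := by
      rw [succAbove_val]; simp
    simp only [Matrix.of_apply, pluckerW, hidx,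
      Fin.ext_iff, Fin.val_last, Fin.coe_castSucc, Fin.val_zero, Fin.val_mk, Fin.val_succ]
    split_ifs <;> first | rfl | omega
  rw [det_unit_last _ (0 : Fin (m + 2)) ?hrow2]
  case hrow2 =>
    intro l
    have hidx : (((⟨m + 2, by omega⟩ : Fin (m + 4)).succAbove ((Fin.last (m + 1)).castSucc)) : ℕ)
        = m + 1 := by
      rw [succAbove_val]; simp
    simp only [Matrix.submatrix_apply, Matrix.of_apply, Fin.succAbove_last, pluckerW, hidx,
      Fin.ext_iff, Fin.val_last, Fin.coe_castSucc, Fin.val_zero, Fin.val_mk, Fin.val_succ]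
    split_ifs <;> first | rfl | omega
  have heq : (((Matrix.of fun a b => pluckerW m h ((⟨m + 2, by omega⟩ : Fin (m + 4)).succAbove a) b).submatrix
      Fin.castSucc (Fin.last (m + 2)).succAbove).submatrix Fin.castSucc (0 : Fin (m + 2)).succAbove)
      = (Matrix.of fun i l : Fin (m + 1) => h (i.1 + l.1 + 2)) := by
    ext a b
    have hidx : (((⟨m + 2, by omega⟩ : Fin (m + 4)).succAbove ((a.castSucc).castSucc)) : ℕ)
        = (a : ℕ) := by
      rw [succAbove_val]; simp only [Fin.coe_castSucc, Fin.val_mk]; rw [if_pos (by omega)]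
    simp only [Matrix.submatrix_apply, Matrix.of_apply, Fin.succAbove_last, Fin.zero_succAbove,
      pluckerW, hidx]
    rw [if_pos (by omega)]
    simp only [Fin.coe_castSucc, Fin.val_succ]
    congr 1
    omega
  rw [heq]
  rw [Fin.val_last, Fin.val_zero]
  rw [show ((-1 : ℂ)) ^ (m + 2 + (m + 2)) = 1 from Even.neg_one_pow ⟨m + 2, by ring⟩]
  ring

lemma hW3 (m : ℕ) (h : ℕ → ℂ) :
    (Matrix.of fun a b => pluckerW m h ((⟨m + 3, by omega⟩ : Fin (m + 4)).succAbove a) b).det =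
      (-1) ^ (m + 2) * ((Matrix.of fun i l : Fin (m + 1) => h (i.1 + l.1 + 2)).updateRow
        (Fin.last m) (fun l => h (m + 1 + l.1 + 2))).det := by
  rw [det_unit_last _ (⟨m + 1, by omega⟩ : Fin (m + 3)) ?hrow]
  case hrow =>
    intro l
    have hidx : (((⟨m + 3, by omega⟩ : Fin (m + 4)).succAbove (Fin.last (m + 2))) : ℕ) = m + 2 := by
      rw [succAbove_val]; simp
    simp only [Matrix.of_apply, pluckerW, hidx,
      Fin.ext_iff, Fin.val_last, Fin.coe_castSucc, Fin.val_zero, Fin.val_mk, Fin.val_succ]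
    split_ifs <;> first | rfl | omega
  rw [det_unit_last _ (0 : Fin (m + 2)) ?hrow2]
  case hrow2 =>
    intro l
    have hidx : (((⟨m + 3, by omega⟩ : Fin (m + 4)).succAbove ((Fin.last (m + 1)).castSucc)) : ℕ)
        = m + 1 := by
      rw [succAbove_val]; simp
    have hcol : (((⟨m + 1, by omega⟩ : Fin (m + 3)).succAbove l) : ℕ)
        = if (l : ℕ) < m + 1 then (l : ℕ) else (l : ℕ) + 1 := by
      rw [succAbove_val]
    simp only [Matrix.submatrix_apply, Matrix.of_apply, pluckerW, hidx, hcol,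
      Fin.ext_iff, Fin.val_last, Fin.coe_castSucc, Fin.val_zero, Fin.val_mk, Fin.val_succ]
    rw [if_neg (by omega), if_pos trivial]
    rcases lt_or_ge (l : ℕ) (m + 1) with hl | hl
    · rw [if_pos hl]
    · rw [if_neg (not_lt.mpr hl), if_neg (by omega), if_neg (by omega)]
  have heq : (((Matrix.of fun a b => pluckerW m h ((⟨m + 3, by omega⟩ : Fin (m + 4)).succAbove a) b).submatrix
      Fin.castSucc (⟨m + 1, by omega⟩ : Fin (m + 3)).succAbove).submatrix Fin.castSucc
        (0 : Fin (m + 2)).succAbove)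
      = ((Matrix.of fun i l : Fin (m + 1) => h (i.1 + l.1 + 2)).updateRow
        (Fin.last m) (fun l => h (m + 1 + l.1 + 2))).transpose := by
    ext a b
    have hidx : (((⟨m + 3, by omega⟩ : Fin (m + 4)).succAbove ((a.castSucc).castSucc)) : ℕ)
        = (a : ℕ) := by
      rw [succAbove_val]; simp only [Fin.coe_castSucc, Fin.val_mk]; rw [if_pos (by omega)]
    have hcol : (((⟨m + 1, by omega⟩ : Fin (m + 3)).succAbove (b.succ)) : ℕ)
        = if (b : ℕ) + 1 < m + 1 then (b : ℕ) + 1 else (b : ℕ) + 2 := by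
      rw [succAbove_val, Fin.val_succ, Fin.val_mk]
    simp only [Matrix.submatrix_apply, Matrix.of_apply, Fin.zero_succAbove, pluckerW, hidx, hcol,
      Matrix.transpose_apply]
    rw [if_pos (show (a : ℕ) ≤ m from Nat.lt_succ_iff.mp a.isLt)]
    rcases eq_or_ne b (Fin.last m) with rfl | hb
    · rw [Matrix.updateRow_self, if_neg (by simp)]
      congr 1
      simp only [Fin.val_last]
      omega
    · have hb' : (b : ℕ) < m := lt_of_le_of_ne (Nat.lt_succ_iff.mp b.isLt)
        (fun hh => hb (Fin.ext (by simpa [Fin.val_last] using hh)))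
      rw [Matrix.updateRow_ne hb, if_pos (by omega)]
      simp only [Matrix.of_apply]
      congr 1
      omega
  rw [heq, Matrix.det_transpose, Fin.val_mk, Fin.val_zero, ← mul_assoc, ← pow_add]
  congr 1
  rw [show m + 2 + (m + 1) + (m + 1 + 0) = (m + 2) + (m + 1 + (m + 1)) from by ring,
    pow_add, Even.neg_one_pow (n := m + 1 + (m + 1)) ⟨m + 1, by ring⟩, mul_one]

lemma hP1 (m : ℕ) (h : ℕ → ℂ) :
    ((Matrix.of fun a b : Fin (m + 3) => h (a.1 + b.1)).updateRow (Fin.last (m + 2))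
        (pluckerW m h ⟨m + 1, by omega⟩)).det =
      (-1) ^ (m + 2) * (Matrix.of fun i l : Fin (m + 2) => h (i.1 + l.1 + 1)).det := by
  rw [det_unit_last _ (0 : Fin (m + 3)) ?hrow]
  case hrow =>
    intro l
    rw [Matrix.updateRow_self]
    simp only [pluckerW, Fin.val_mk]
    rw [if_neg (by omega)]
    rw [if_pos trivial]; simp only [Fin.ext_iff, Fin.val_zero]
  have heq : (((Matrix.of fun a b : Fin (m + 3) => h (a.1 + b.1)).updateRow (Fin.last (m + 2))
        (pluckerW m h ⟨m + 1, by omega⟩)).submatrix Fin.castSucc (0 : Fin (m + 3)).succAbove)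
      = (Matrix.of fun i l : Fin (m + 2) => h (i.1 + l.1 + 1)) := by
    ext a b
    rw [Matrix.submatrix_apply, Matrix.updateRow_ne (Fin.castSucc_lt_last a).ne]
    simp only [Matrix.of_apply, Fin.zero_succAbove, Fin.coe_castSucc, Fin.val_succ]
    congr 1
  rw [heq, Fin.val_zero, Nat.add_zero]

lemma hP2 (m : ℕ) (h : ℕ → ℂ) :
    ((Matrix.of fun a b : Fin (m + 3) => h (a.1 + b.1)).updateRow (Fin.last (m + 2))
        (pluckerW m h ⟨m + 2, by omega⟩)).det =
      (-1) * ((Matrix.of fun i l : Fin (m + 2) => h (i.1 + l.1)).updateRow (Fin.last (m + 1))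
        (fun l => h (m + 2 + l.1))).det := by
  rw [det_unit_last _ (⟨m + 1, by omega⟩ : Fin (m + 3)) ?hrow]
  case hrow =>
    intro l
    rw [Matrix.updateRow_self]
    simp only [pluckerW, Fin.val_mk]
    rw [if_neg (by omega)]
    simp [Fin.ext_iff, Fin.val_mk]
  have heq : (((Matrix.of fun a b : Fin (m + 3) => h (a.1 + b.1)).updateRow (Fin.last (m + 2))
        (pluckerW m h ⟨m + 2, by omega⟩)).submatrix Fin.castSucc
          (⟨m + 1, by omega⟩ : Fin (m + 3)).succAbove)
      = ((Matrix.of fun i l : Fin (m + 2) => h (i.1 + l.1)).updateRow (Fin.last (m + 1))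
        (fun l => h (m + 2 + l.1))).transpose := by
    ext a b
    rw [Matrix.submatrix_apply, Matrix.updateRow_ne (Fin.castSucc_lt_last a).ne,
      Matrix.transpose_apply]
    have hcol : (((⟨m + 1, by omega⟩ : Fin (m + 3)).succAbove b) : ℕ)
        = if (b : ℕ) < m + 1 then (b : ℕ) else (b : ℕ) + 1 := by
      rw [succAbove_val, Fin.val_mk]
    simp only [Matrix.of_apply, hcol, Fin.coe_castSucc]
    rcases eq_or_ne b (Fin.last (m + 1)) with rfl | hb
    · rw [Matrix.updateRow_self, if_neg (by simp)]
      congr 1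
      simp only [Fin.val_last]
      omega
    · have hb' : (b : ℕ) < m + 1 := lt_of_le_of_ne (Nat.lt_succ_iff.mp b.isLt)
        (fun hh => hb (Fin.ext (by simpa [Fin.val_last] using hh)))
      rw [Matrix.updateRow_ne hb, if_pos hb']
      simp only [Matrix.of_apply]
      congr 1
      omega
  rw [heq, Matrix.det_transpose, Fin.val_mk]
  congr 1
  rw [show m + 2 + (m + 1) = (2 * m + 3) from by ring]
  exact Odd.neg_one_pow ⟨m + 1, by ring⟩

lemma hP3 (m : ℕ) (h : ℕ → ℂ) :
    ((Matrix.of fun a b : Fin (m + 3) => h (a.1 + b.1)).updateRow (Fin.last (m + 2))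
        (pluckerW m h ⟨m + 3, by omega⟩)).det =
      (Matrix.of fun i l : Fin (m + 2) => h (i.1 + l.1)).det := by
  rw [det_unit_last _ (Fin.last (m + 2)) ?hrow]
  case hrow =>
    intro l
    rw [Matrix.updateRow_self]
    simp only [pluckerW, Fin.val_mk]
    rw [if_neg (by omega)]
    simp [Fin.ext_iff]
  have heq : (((Matrix.of fun a b : Fin (m + 3) => h (a.1 + b.1)).updateRow (Fin.last (m + 2))
        (pluckerW m h ⟨m + 3, by omega⟩)).submatrix Fin.castSucc (Fin.last (m + 2)).succAbove)
      = (Matrix.of fun i l : Fin (m + 2) => h (i.1 + l.1)) := by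
    ext a b
    rw [Fin.succAbove_last, Matrix.submatrix_apply,
      Matrix.updateRow_ne (Fin.castSucc_lt_last a).ne]
    simp
  rw [heq, Fin.val_last]
  rw [show ((-1 : ℂ)) ^ (m + 2 + (m + 2)) = 1 from Even.neg_one_pow ⟨m + 2, by ring⟩, one_mul]

lemma key (m : ℕ) (h : ℕ → ℂ) :
    (Matrix.of fun i l : Fin (m + 1) => h (i.1 + l.1 + 2)).det *
      ((Matrix.of fun i l : Fin (m + 2) => h (i.1 + l.1)).updateRow (Fin.last (m + 1))
        (fun l => h (m + 2 + l.1))).det -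
    (Matrix.of fun i l : Fin (m + 2) => h (i.1 + l.1)).det *
      ((Matrix.of fun i l : Fin (m + 1) => h (i.1 + l.1 + 2)).updateRow (Fin.last m)
        (fun l => h (m + 1 + l.1 + 2))).det =
    (Matrix.of fun i l : Fin (m + 1) => h (i.1 + l.1 + 1)).det *
      (Matrix.of fun i l : Fin (m + 2) => h (i.1 + l.1 + 1)).det := by
  have main := dep_sum (n := m + 2) (pluckerW m h)
    (Matrix.of fun a b : Fin (m + 3) => h (a.1 + b.1)) (Fin.last (m + 2))
  rw [Fin.sum_univ_castSucc, Fin.sum_univ_castSucc, Fin.sum_univ_castSucc] at main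
  have hz : ∀ i : Fin (m + 1),
      (-1 : ℂ) ^ ((i.castSucc.castSucc.castSucc : Fin (m + 4)) : ℕ) *
        ((Matrix.of fun a b : Fin (m + 3) => h (a.1 + b.1)).updateRow (Fin.last (m + 2))
          (pluckerW m h i.castSucc.castSucc.castSucc)).det *
        (Matrix.of fun a b =>
          pluckerW m h ((i.castSucc.castSucc.castSucc : Fin (m + 4)).succAbove a) b).det = 0 := by
    intro i
    have hdet : ((Matrix.of fun a b : Fin (m + 3) => h (a.1 + b.1)).updateRow (Fin.last (m + 2))
        (pluckerW m h i.castSucc.castSucc.castSucc)).det = 0 := by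
      apply Matrix.det_zero_of_row_eq (i := (⟨(i : ℕ) + 1, by omega⟩ : Fin (m + 3)))
        (j := Fin.last (m + 2))
      · simp only [ne_eq, Fin.ext_iff, Fin.val_mk, Fin.val_last]
        omega
      · rw [Matrix.updateRow_ne (by simp only [ne_eq, Fin.ext_iff, Fin.val_mk, Fin.val_last]; omega),
          Matrix.updateRow_self]
        funext b
        simp only [Matrix.of_apply, Fin.val_mk, pluckerW, Fin.coe_castSucc]
        rw [if_pos (by simpa using Nat.lt_succ_iff.mp i.isLt)]
    rw [hdet, mul_zero, zero_mul]
  rw [Finset.sum_eq_zero fun i _ => hz i, zero_add] at main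
  rw [show ((Fin.last (m + 1)).castSucc.castSucc : Fin (m + 4)) = ⟨m + 1, by omega⟩ from by
      simp [Fin.ext_iff],
    show ((Fin.last (m + 2)).castSucc : Fin (m + 4)) = ⟨m + 2, by omega⟩ from by
      simp [Fin.ext_iff],
    show (Fin.last (m + 3) : Fin (m + 4)) = ⟨m + 3, by omega⟩ from by simp [Fin.ext_iff]] at main
  rw [hW1, hW2, hW3, hP1, hP2, hP3] at main
  simp only [Fin.val_mk] at main
  have hs : ((-1 : ℂ)) ^ m * ((-1 : ℂ)) ^ m = 1 := by
    rw [← pow_add]; exact Even.neg_one_pow ⟨m, rfl⟩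
  set A := (Matrix.of fun i l : Fin (m + 2) => h (i.1 + l.1)).det
  set A' := ((Matrix.of fun i l : Fin (m + 2) => h (i.1 + l.1)).updateRow (Fin.last (m + 1))
        (fun l => h (m + 2 + l.1))).det
  set B := (Matrix.of fun i l : Fin (m + 1) => h (i.1 + l.1 + 2)).det
  set B' := ((Matrix.of fun i l : Fin (m + 1) => h (i.1 + l.1 + 2)).updateRow (Fin.last m)
        (fun l => h (m + 1 + l.1 + 2))).det
  set C := (Matrix.of fun i l : Fin (m + 1) => h (i.1 + l.1 + 1)).det
  set D := (Matrix.of fun i l : Fin (m + 2) => h (i.1 + l.1 + 1)).det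
  linear_combination main + (C * D + A * B' - A' * B) * hs

lemma det_hasDerivAt {n : ℕ} {M : ℝ → Matrix (Fin n) (Fin n) ℂ}
    {N : Matrix (Fin n) (Fin n) ℂ} {x : ℝ}
    (hM : ∀ i l, HasDerivAt (fun y => M y i l) (N i l) x) :
    HasDerivAt (fun y => (M y).det)
      (∑ i, ((M x).updateRow i (N i)).det) x := by
  have h1 : ∀ σ : Equiv.Perm (Fin n),
      HasDerivAt (fun y => ∏ l, M y (σ l) l)
        (∑ l, (∏ l' ∈ Finset.univ.erase l, M x (σ l') l') * N (σ l) l) x := by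
    intro σ
    have := HasDerivAt.fun_finsetProd (u := Finset.univ) (f := fun l y => M y (σ l) l)
      (f' := fun l => N (σ l) l) (fun l _ => hM (σ l) l)
    simpa [smul_eq_mul] using this
  have h2 : HasDerivAt (fun y => (M y).det)
      (∑ σ : Equiv.Perm (Fin n), (Equiv.Perm.sign σ : ℂ) *
        ∑ l, (∏ l' ∈ Finset.univ.erase l, M x (σ l') l') * N (σ l) l) x := by
    simp only [Matrix.det_apply']
    exact HasDerivAt.fun_sum fun σ _ => (h1 σ).const_mul _
  convert h2 using 1
  calc ∑ i, ((M x).updateRow i (N i)).det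
      = ∑ i, ∑ σ : Equiv.Perm (Fin n), (Equiv.Perm.sign σ : ℂ) *
          ∏ l, ((M x).updateRow i (N i)) (σ l) l := by
        exact Finset.sum_congr rfl fun i _ => Matrix.det_apply' _
    _ = ∑ σ : Equiv.Perm (Fin n), ∑ i, (Equiv.Perm.sign σ : ℂ) *
          ∏ l, ((M x).updateRow i (N i)) (σ l) l := Finset.sum_comm
    _ = ∑ σ : Equiv.Perm (Fin n), (Equiv.Perm.sign σ : ℂ) *
        ∑ l, (∏ l' ∈ Finset.univ.erase l, M x (σ l') l') * N (σ l) l := by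
        refine Finset.sum_congr rfl fun σ _ => ?_
        rw [Finset.mul_sum]
        rw [← Equiv.sum_comp σ (fun i => (Equiv.Perm.sign σ : ℂ) *
          ∏ l, ((M x).updateRow i (N i)) (σ l) l)]
        refine Finset.sum_congr rfl fun l _ => ?_
        congr 1
        rw [← Finset.mul_prod_erase Finset.univ _ (Finset.mem_univ l)]
        rw [mul_comm]
        congr 1
        · exact Finset.prod_congr rfl fun l' hl' => by
            rw [Matrix.updateRow_ne]
            exact fun hc => (Finset.mem_erase.mp hl').1 (σ.injective hc)
        · rw [Matrix.updateRow_self]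

lemma hankel_shift_hasDerivAt (q s : ℕ) (g : ℝ → ℂ)
    (hd : ∀ k, k ≤ 2 * q + s → Differentiable ℝ (iteratedDeriv k g)) (x : ℝ) :
    HasDerivAt (fun y => (Matrix.of fun i l : Fin (q + 1) => iteratedDeriv (i.1 + l.1 + s) g y).det)
      (((Matrix.of fun i l : Fin (q + 1) => iteratedDeriv (i.1 + l.1 + s) g x).updateRow
        (Fin.last q) (fun l => iteratedDeriv (q + 1 + l.1 + s) g x)).det) x := by
  have hM : ∀ i l : Fin (q + 1), HasDerivAt (fun y => iteratedDeriv (i.1 + l.1 + s) g y)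
      (iteratedDeriv (i.1 + l.1 + s + 1) g x) x := by
    intro i l
    have h1 : DifferentiableAt ℝ (iteratedDeriv (i.1 + l.1 + s) g) x :=
      (hd (i.1 + l.1 + s) (by have := i.isLt; have := l.isLt; omega)) x
    have h2 := h1.hasDerivAt
    rw [show iteratedDeriv (i.1 + l.1 + s + 1) g = deriv (iteratedDeriv (i.1 + l.1 + s) g) from
      iteratedDeriv_succ]
    exact h2
  have h := det_hasDerivAt (M := fun y =>
      Matrix.of fun i l : Fin (q + 1) => iteratedDeriv (i.1 + l.1 + s) g y)
    (N := Matrix.of fun i l : Fin (q + 1) => iteratedDeriv (i.1 + l.1 + s + 1) g x)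
    (fun i l => hM i l)
  have hsum : ∑ i, (((Matrix.of fun i l : Fin (q + 1) => iteratedDeriv (i.1 + l.1 + s) g x)).updateRow i
        ((Matrix.of fun i l : Fin (q + 1) => iteratedDeriv (i.1 + l.1 + s + 1) g x) i)).det =
      (((Matrix.of fun i l : Fin (q + 1) => iteratedDeriv (i.1 + l.1 + s) g x)).updateRow
        (Fin.last q) (fun l => iteratedDeriv (q + 1 + l.1 + s) g x)).det := by
    rw [Finset.sum_eq_single (Fin.last q)]
    · have harg : (Matrix.of (fun i l : Fin (q + 1) => iteratedDeriv (i.1 + l.1 + s + 1) g x))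
          (Fin.last q) = fun l => iteratedDeriv (q + 1 + l.1 + s) g x := by
        funext l
        show iteratedDeriv ((Fin.last q : Fin (q + 1)).1 + l.1 + s + 1) g x = _
        rw [Fin.val_last]
        congr 1
        omega
      rw [harg]
    · intro i _ hi
      have hlt : (i : ℕ) < q := by
        have h3 := i.isLt
        have h4 : (i : ℕ) ≠ q := fun hc => hi (Fin.ext (by simpa [Fin.val_last] using hc))
        omega
      apply Matrix.det_zero_of_row_eq (i := i) (j := (⟨(i : ℕ) + 1, by omega⟩ : Fin (q + 1)))
      · simp only [ne_eq, Fin.ext_iff, Fin.val_mk]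
        omega
      · rw [Matrix.updateRow_self,
          Matrix.updateRow_ne (by simp only [ne_eq, Fin.ext_iff, Fin.val_mk]; omega)]
        funext b
        simp only [Matrix.of_apply, Fin.val_mk]
        congr 1
        omega
    · intro hc
      exact absurd (Finset.mem_univ _) hc
  rw [hsum] at h
  exact h

/-- `hankelDeriv p g x` is the determinant of the `(p+1) × (p+1)` Hankel matrix whose
`(i,l)`-entry is the `(i+l)`-th derivative `g^{(i+l)}(x)`; in particular `hankelDeriv 0 g = g`. -/
noncomputable def hankelDeriv (p : ℕ) (g : ℝ → ℂ) (x : ℝ) : ℂ :=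
  (Matrix.of fun i l : Fin (p + 1) => iteratedDeriv (i.1 + l.1) g x).det

/-- For `j ≥ 1` and a `2j+2` times differentiable `g : ℝ → ℂ`, the functions `Δ_j(g)` and
`Δ_{j-1}(g'')` are differentiable with
`Δ_{j-1}(g'')·(Δ_j(g))' − Δ_j(g)·(Δ_{j-1}(g''))' = Δ_{j-1}(g')·Δ_j(g')`. -/
theorem hankelDeriv_identity_b (j : ℕ) (hj : 1 ≤ j) (g : ℝ → ℂ)
    (hg : ContDiff ℝ (2 * j + 2 : ℕ) g) :
    Differentiable ℝ (hankelDeriv j g) ∧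
    Differentiable ℝ (hankelDeriv (j - 1) (deriv (deriv g))) ∧
    ∀ x : ℝ,
      hankelDeriv (j - 1) (deriv (deriv g)) x * deriv (hankelDeriv j g) x -
          hankelDeriv j g x * deriv (hankelDeriv (j - 1) (deriv (deriv g))) x =
        hankelDeriv (j - 1) (deriv g) x * hankelDeriv j (deriv g) x := by
  obtain ⟨m, rfl⟩ : ∃ m, j = m + 1 := ⟨j - 1, by omega⟩
  simp only [Nat.add_sub_cancel]
  have hd : ∀ k, k ≤ 2 * m + 2 → Differentiable ℝ (iteratedDeriv k g) := by
    intro k hk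
    exact hg.differentiable_iteratedDeriv k (by exact_mod_cast (by omega : k < 2 * (m + 1) + 2))
  -- rewrite the second-derivative Hankel in terms of g
  have hgg : hankelDeriv m (deriv (deriv g)) =
      fun y => (Matrix.of fun i l : Fin (m + 1) => iteratedDeriv (i.1 + l.1 + 2) g y).det := by
    funext y
    unfold hankelDeriv
    congr 1
    ext i l
    simp only [Matrix.of_apply]
    rw [show i.1 + l.1 + 2 = (i.1 + l.1) + 1 + 1 from rfl, iteratedDeriv_succ',
      iteratedDeriv_succ']
  have hg1 : ∀ y, hankelDeriv m (deriv g) y =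
      (Matrix.of fun i l : Fin (m + 1) => iteratedDeriv (i.1 + l.1 + 1) g y).det := by
    intro y
    unfold hankelDeriv
    congr 1
    ext i l
    simp only [Matrix.of_apply]
    rw [show i.1 + l.1 + 1 = (i.1 + l.1) + 1 from rfl, iteratedDeriv_succ']
  have hg2 : ∀ y, hankelDeriv (m + 1) (deriv g) y =
      (Matrix.of fun i l : Fin (m + 2) => iteratedDeriv (i.1 + l.1 + 1) g y).det := by
    intro y
    unfold hankelDeriv
    congr 1
    ext i l
    simp only [Matrix.of_apply]
    rw [show i.1 + l.1 + 1 = (i.1 + l.1) + 1 from rfl, iteratedDeriv_succ']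
  -- derivative facts
  have HA : ∀ x : ℝ, HasDerivAt (hankelDeriv (m + 1) g)
      (((Matrix.of fun i l : Fin (m + 2) => iteratedDeriv (i.1 + l.1) g x).updateRow
        (Fin.last (m + 1)) (fun l => iteratedDeriv (m + 2 + l.1) g x)).det) x := by
    intro x
    exact hankel_shift_hasDerivAt (m + 1) 0 g (fun k hk => hd k (by omega)) x
  have HB : ∀ x : ℝ, HasDerivAt (hankelDeriv m (deriv (deriv g)))
      (((Matrix.of fun i l : Fin (m + 1) => iteratedDeriv (i.1 + l.1 + 2) g x).updateRow
        (Fin.last m) (fun l => iteratedDeriv (m + 1 + l.1 + 2) g x)).det) x := by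
    intro x
    rw [hgg]
    exact hankel_shift_hasDerivAt m 2 g (fun k hk => hd k (by omega)) x
  refine ⟨fun x => (HA x).differentiableAt, fun x => (HB x).differentiableAt, fun x => ?_⟩
  rw [(HA x).deriv, (HB x).deriv, hg1 x, hg2 x]
  have hgg' : hankelDeriv m (deriv (deriv g)) x =
      (Matrix.of fun i l : Fin (m + 1) => iteratedDeriv (i.1 + l.1 + 2) g x).det := by
    rw [hgg]
  rw [hgg']
  have hAx : hankelDeriv (m + 1) g x =
      (Matrix.of fun i l : Fin (m + 2) => iteratedDeriv (i.1 + l.1) g x).det := rfl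
  rw [hAx]
  exact key m (fun k => iteratedDeriv k g x)
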